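/- Any family of 2n-1 matchings, each of size n, in a bipartite graph has a rainbow matching of size n: one can choose edges e_1 ∈ M_{i_1}, ..., e_n ∈ M_{i_n} from n distinct matchings of the family such that {e_1,...,e_n} is a matching. -/

import Mathlib

/-- A set of edges of a bipartite graph (edges given as pairs) is a matching
if distinct edges share no endpoint. -/
def IsMatching {α β : Type*} (M : Set (α × β)) : Prop :=
  ∀ e ∈ M, ∀ f ∈ M, e ≠ f → e.1 ≠ f.1 ∧ e.2 ≠ f.2

/-- `F` contains a matching of size `n`. -/
def HasMatchingOfSize {α β : Type*} (n : ℕ) (F : Set (α × β)) : Prop :=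
  ∃ e : Fin n → α × β, Function.Injective e ∧ (∀ j, e j ∈ F) ∧
    IsMatching (Set.range e)

/-- The family `F` has a rainbow matching of size `n`: `n` pairwise disjoint
edges chosen from `n` distinct members of the family. -/
def HasRainbowMatchingOfSize {α β ι : Type*} (n : ℕ) (F : ι → Set (α × β)) : Prop :=
  ∃ (g : Fin n ↪ ι) (e : Fin n → α × β), Function.Injective e ∧
    (∀ j, e j ∈ F (g j)) ∧ IsMatching (Set.range e)

namespace DriskoAux

variable {α β ι : Type*}

def RB (n : ℕ) (M : ι → Finset (α × β)) : Prop :=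
  ∃ (g : Fin n → ι) (e : Fin n → α × β),
    (∀ j j' : Fin n, g j = g j' → j = j') ∧ (∀ j, e j ∈ M (g j)) ∧
    (∀ j j' : Fin n, (e j).1 = (e j').1 → j = j') ∧
    (∀ j j' : Fin n, (e j).2 = (e j').2 → j = j')

lemma snoc_inj {m : ℕ} {γ δ : Type*} (p : Fin m → γ) (x : γ) (φ : γ → δ)
    (h1 : ∀ j j' : Fin m, φ (p j) = φ (p j') → j = j') (h2 : ∀ j, φ x ≠ φ (p j)) :
    ∀ j j' : Fin (m+1), φ ((Fin.snoc p x : Fin (m+1) → γ) j) = φ ((Fin.snoc p x : Fin (m+1) → γ) j') → j = j' := by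
  intro j j' hjj'
  rcases Fin.eq_castSucc_or_eq_last j with ⟨a, rfl⟩ | rfl <;>
    rcases Fin.eq_castSucc_or_eq_last j' with ⟨b, rfl⟩ | rfl
  · simp only [Fin.snoc_castSucc] at hjj'
    exact congrArg _ (h1 a b hjj')
  · simp only [Fin.snoc_castSucc, Fin.snoc_last] at hjj'
    exact absurd hjj'.symm (h2 a)
  · simp only [Fin.snoc_castSucc, Fin.snoc_last] at hjj'
    exact absurd hjj' (h2 b)
  · rfl

lemma snoc_mem {m : ℕ} (M : ι → Finset (α × β)) (p : Fin m → ι) (x : ι)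
    (R : Fin m → α × β) (f : α × β)
    (h1 : ∀ j, R j ∈ M (p j)) (h2 : f ∈ M x) :
    ∀ j : Fin (m+1), (Fin.snoc R f : Fin (m+1) → α × β) j ∈ M ((Fin.snoc p x : Fin (m+1) → ι) j) := by
  intro j
  rcases Fin.eq_castSucc_or_eq_last j with ⟨a, rfl⟩ | rfl <;>
    simp [Fin.snoc_castSucc, Fin.snoc_last, h1, h2]

lemma match_fst {M : Finset (α × β)} (hM : IsMatching (↑M : Set (α × β)))
    {f f' : α × β} (hf : f ∈ M) (hf' : f' ∈ M) (h : f.1 = f'.1) : f = f' := by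
  by_contra hne
  exact (hM f hf f' hf' hne).1 h

lemma match_snd {M : Finset (α × β)} (hM : IsMatching (↑M : Set (α × β)))
    {f f' : α × β} (hf : f ∈ M) (hf' : f' ∈ M) (h : f.2 = f'.2) : f = f' := by
  by_contra hne
  exact (hM f hf f' hf' hne).2 h

def Inv (M : ι → Finset (α × β)) {m : ℕ} (g : Fin m → ι) (e : Fin m → α × β)
    (h : ℕ → ι) (s : ℕ) : Prop :=
  ∃ w : ℕ → ℕ,
    (∀ i, i < s → w i < m) ∧
    (∀ i i', i < s → i' < s → w i = w i' → i = i') ∧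
    ∀ i, i < s → ∃ (jw : Fin m) (p : Fin m → ι) (R : Fin m → α × β),
      (jw : ℕ) = w i ∧
      (∀ j j' : Fin m, p j = p j' → j = j') ∧
      (∀ j, R j ∈ M (p j)) ∧
      (∀ j, (R j).1 = (e j).1) ∧
      (∀ j j' : Fin m, (R j).2 = (R j').2 → j = j') ∧
      (∀ j, (R j).2 ≠ (e jw).2) ∧
      (∀ j j' : Fin m, (¬ ∃ i', i' ≤ i ∧ w i' = (j' : ℕ)) → (R j).2 = (e j').2 → j = j') ∧
      (∀ j : Fin m, (¬ ∃ i', i' ≤ i ∧ w i' = (j : ℕ)) → R j = e j ∧ p j = g j) ∧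
      (∀ j, (∃ j₀, p j = g j₀) ∨ ∃ i', i' ≤ i ∧ p j = h i')

lemma key {m n : ℕ} (hm : 0 < m) (hmn : m < n) (M : ι → Finset (α × β))
    (hmatch : ∀ i, IsMatching (↑(M i) : Set (α × β)))
    (hcard : ∀ i, (M i).card = n)
    (g : Fin m → ι) (e : Fin m → α × β)
    (hg : ∀ j j' : Fin m, g j = g j' → j = j') (he : ∀ j, e j ∈ M (g j))
    (heA : ∀ j j' : Fin m, (e j).1 = (e j').1 → j = j')
    (heB : ∀ j j' : Fin m, (e j).2 = (e j').2 → j = j')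
    (h : ℕ → ι)
    (hh : ∀ i i', i ≤ m → i' ≤ m → h i = h i' → i = i')
    (hdg : ∀ i (j : Fin m), i ≤ m → h i ≠ g j)
    (s : ℕ) (hs : s ≤ m) (hinv : Inv M g e h s) :
    RB (m+1) M ∨ Inv M g e h (s+1) := by
  classical
  obtain ⟨w, hwlt, hwinj, hdata⟩ := hinv
  -- candidate edges of the fresh matching M (h s)
  set C : Finset (α × β) :=
    (M (h s)).filter (fun f => ∀ j : Fin m, (¬ ∃ i', i' < s ∧ w i' = (j : ℕ)) → f.2 ≠ (e j).2)
    with hCdef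
  set V : Finset (Fin m) :=
    Finset.univ.filter (fun j : Fin m => ∃ i', i' < s ∧ w i' = (j : ℕ)) with hVdef
  have hV : s ≤ V.card := by
    have := Finset.card_le_card_of_injOn
      (f := fun i : ℕ => if hi : i < s then (⟨w i, hwlt i hi⟩ : Fin m) else ⟨0, hm⟩)
      (s := Finset.range s) (t := V) ?_ ?_
    · simpa using this
    · intro a ha
      rw [Finset.mem_coe, Finset.mem_range] at ha
      rw [Finset.mem_coe, hVdef, Finset.mem_filter]
      refine ⟨Finset.mem_univ _, ⟨a, ha, ?_⟩⟩
      dsimp only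
      rw [dif_pos ha]
    · intro a ha b hb hab
      simp only [Finset.coe_range, Set.mem_Iio] at ha hb
      dsimp only at hab
      rw [dif_pos ha, dif_pos hb] at hab
      exact hwinj a b ha hb (congrArg Fin.val hab)
  have hVle : V.card ≤ s := by
    have hmain : V.card ≤ (Finset.range s).card := by
      refine Finset.card_le_card_of_injOn
        (f := fun j : Fin m => if hj : ∃ i', i' < s ∧ w i' = (j : ℕ) then hj.choose else 0) ?_ ?_
      · intro j hj
        rw [Finset.mem_coe, hVdef, Finset.mem_filter] at hj
        dsimp only
        rw [dif_pos hj.2, Finset.mem_coe, Finset.mem_range]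
        exact hj.2.choose_spec.1
      · intro j hj j' hj' heq2
        rw [hVdef, Finset.coe_filter, Set.mem_setOf_eq] at hj hj'
        dsimp only at heq2
        rw [dif_pos hj.2, dif_pos hj'.2] at heq2
        have h1 := hj.2.choose_spec.2
        have h2 := hj'.2.choose_spec.2
        have h3 := congrArg w heq2
        exact Fin.ext (by rw [← h1, h3, h2])
    simpa using hmain
  have hC : s + 1 ≤ C.card := by
    set D : Finset (α × β) :=
      (M (h s)).filter (fun f => ¬ ∀ j : Fin m, (¬ ∃ i', i' < s ∧ w i' = (j : ℕ)) → f.2 ≠ (e j).2)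
      with hDdef
    have hCD : C.card + D.card = n := by
      rw [hCdef, hDdef, Finset.card_filter_add_card_filter_not]
      exact hcard _
    set U : Finset (Fin m) :=
      Finset.univ.filter (fun j : Fin m => ¬ ∃ i', i' < s ∧ w i' = (j : ℕ)) with hUdef
    have hUV : V.card + U.card = m := by
      rw [hUdef, hVdef, Finset.card_filter_add_card_filter_not]
      simp
    have hD : D.card ≤ U.card := by
      refine Finset.card_le_card_of_injOn
        (f := fun f => if hf : ∃ j : Fin m, (¬ ∃ i', i' < s ∧ w i' = (j : ℕ)) ∧ f.2 = (e j).2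
          then hf.choose else ⟨0, hm⟩) ?_ ?_
      · intro f hf
        rw [Finset.mem_coe, hDdef, Finset.mem_filter] at hf
        push_neg at hf
        obtain ⟨hfM, j, hj1, hj2⟩ := hf
        have hex : ∃ j : Fin m, (¬ ∃ i', i' < s ∧ w i' = (j : ℕ)) ∧ f.2 = (e j).2 :=
          ⟨j, by push_neg; exact hj1, hj2⟩
        dsimp only
        rw [dif_pos hex, Finset.mem_coe, hUdef, Finset.mem_filter]
        exact ⟨Finset.mem_univ _, hex.choose_spec.1⟩
      · intro f hf f' hf' hff'
        rw [hDdef, Finset.coe_filter, Set.mem_setOf_eq] at hf hf'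
        push_neg at hf hf'
        obtain ⟨hfM, j, hj1, hj2⟩ := hf
        obtain ⟨hfM', j', hj1', hj2'⟩ := hf'
        have hex : ∃ j : Fin m, (¬ ∃ i', i' < s ∧ w i' = (j : ℕ)) ∧ f.2 = (e j).2 :=
          ⟨j, by push_neg; exact hj1, hj2⟩
        have hex' : ∃ j : Fin m, (¬ ∃ i', i' < s ∧ w i' = (j : ℕ)) ∧ f'.2 = (e j).2 :=
          ⟨j', by push_neg; exact hj1', hj2'⟩
        dsimp only at hff'
        rw [dif_pos hex, dif_pos hex'] at hff'
        have h2 : f.2 = f'.2 := by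
          rw [hex.choose_spec.2, hex'.choose_spec.2, hff']
        exact match_snd (hmatch (h s)) hfM hfM' h2
    omega
  by_cases hcaseA : ∃ f ∈ C, ∀ j : Fin m, f.1 ≠ (e j).1
  · -- Case A: augment to a rainbow matching of size m+1
    left
    obtain ⟨f, hfC, hfree1⟩ := hcaseA
    have hfM : f ∈ M (h s) := (Finset.mem_filter.1 hfC).1
    have hfP : ∀ j : Fin m, (¬ ∃ i', i' < s ∧ w i' = (j : ℕ)) → f.2 ≠ (e j).2 :=
      (Finset.mem_filter.1 hfC).2
    by_cases hfree2 : ∀ j : Fin m, f.2 ≠ (e j).2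
    · refine ⟨Fin.snoc g (h s), Fin.snoc e f, ?_, ?_, ?_, ?_⟩
      · exact snoc_inj g (h s) id hg (fun j => hdg s j hs)
      · exact snoc_mem M g (h s) e f he hfM
      · exact snoc_inj e f Prod.fst heA hfree1
      · exact snoc_inj e f Prod.snd heB hfree2
    · push_neg at hfree2
      obtain ⟨j₀, hj₀⟩ := hfree2
      have hrch : ∃ i', i' < s ∧ w i' = (j₀ : ℕ) := by
        by_contra hcon
        exact hfP j₀ hcon hj₀
      obtain ⟨i, his, hwi⟩ := hrch
      obtain ⟨jw, p, R, hjw, hpinj, hmem, hR1, hR2, hR4, hR5, hagree, hrange⟩ := hdata i his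
      have hjwj : jw = j₀ := Fin.ext (by rw [hjw, hwi])
      have hnotp : ∀ j, h s ≠ p j := by
        intro j hj
        rcases hrange j with ⟨j₁, hj₁⟩ | ⟨i', hi', hieq⟩
        · rw [hj₁] at hj
          exact hdg s j₁ hs hj
        · rw [hieq] at hj
          have := hh s i' hs (by omega) hj
          omega
      refine ⟨Fin.snoc p (h s), Fin.snoc R f, ?_, ?_, ?_, ?_⟩
      · exact snoc_inj p (h s) id hpinj hnotp
      · exact snoc_mem M p (h s) R f hmem hfM
      · refine snoc_inj R f Prod.fst ?_ ?_
        · intro a b hab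
          rw [show (Prod.fst (R a)) = (e a).1 from hR1 a,
              show (Prod.fst (R b)) = (e b).1 from hR1 b] at hab
          exact heA a b hab
        · intro j hj
          rw [show (Prod.fst (R j)) = (e j).1 from hR1 j] at hj
          exact hfree1 j hj
      · refine snoc_inj R f Prod.snd hR2 ?_
        intro j hj
        apply hR4 j
        rw [← hj, hj₀, hjwj]
  · -- Case B: extend the invariant
    right
    push_neg at hcaseA
    set jm : α × β → Fin m := fun f =>
      if hf : ∃ j : Fin m, f.1 = (e j).1 then hf.choose else ⟨0, hm⟩ with hjmdef
    have hjm : ∀ f ∈ C, f.1 = (e (jm f)).1 := by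
      intro f hf
      have hex := hcaseA f hf
      rw [hjmdef]
      dsimp only
      rw [dif_pos hex]
      exact hex.choose_spec
    have hexists : ∃ f ∈ C, ¬ ∃ i', i' < s ∧ w i' = ((jm f : Fin m) : ℕ) := by
      by_contra hcon
      push_neg at hcon
      have hle : C.card ≤ V.card := by
        refine Finset.card_le_card_of_injOn jm ?_ ?_
        · intro f hf
          rw [Finset.mem_coe, hVdef, Finset.mem_filter]
          exact ⟨Finset.mem_univ _, hcon f hf⟩
        · intro f hf f' hf' heq2
          rw [Finset.mem_coe] at hf hf'
          have h1 : f.1 = f'.1 := by rw [hjm f hf, hjm f' hf', heq2]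
          exact match_fst (hmatch (h s)) (Finset.mem_filter.1 hf).1 (Finset.mem_filter.1 hf').1 h1
      omega
    obtain ⟨f, hfC, hfresh⟩ := hexists
    have hfM : f ∈ M (h s) := (Finset.mem_filter.1 hfC).1
    have hfP : ∀ j : Fin m, (¬ ∃ i', i' < s ∧ w i' = (j : ℕ)) → f.2 ≠ (e j).2 :=
      (Finset.mem_filter.1 hfC).2
    set js : Fin m := jm f with hjsdef
    have hjsf : f.1 = (e js).1 := hjm f hfC
    refine ⟨fun i => if i = s then (js : ℕ) else w i, ?_, ?_, ?_⟩
    · intro i hi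
      dsimp only
      by_cases h1 : i = s
      · rw [if_pos h1]; exact js.isLt
      · rw [if_neg h1]; exact hwlt i (by omega)
    · intro i i' hi hi' heq
      dsimp only at heq
      by_cases h1 : i = s <;> by_cases h2 : i' = s
      · omega
      · rw [if_pos h1, if_neg h2] at heq
        exact absurd ⟨i', by omega, heq.symm⟩ hfresh
      · rw [if_neg h1, if_pos h2] at heq
        exact absurd ⟨i, by omega, heq⟩ hfresh
      · rw [if_neg h1, if_neg h2] at heq
        exact hwinj i i' (by omega) (by omega) heq
    · intro i hi
      by_cases hieq : i = s
      case neg =>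
        have his : i < s := by omega
        obtain ⟨jw, p, R, hjw, hpinj, hmem, hR1, hR2, hR4, hR5, hagree, hrange⟩ := hdata i his
        refine ⟨jw, p, R, ?_, hpinj, hmem, hR1, hR2, hR4, ?_, ?_, hrange⟩
        · dsimp only
          rw [if_neg (by omega : ¬ i = s)]
          exact hjw
        · intro j j' hguard heq2
          refine hR5 j j' ?_ heq2
          rintro ⟨i', hi1, hi2⟩
          exact hguard ⟨i', hi1, by dsimp only; rw [if_neg (by omega : ¬ i' = s)]; exact hi2⟩
        · intro j hguard
          refine hagree j ?_
          rintro ⟨i', hi1, hi2⟩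
          exact hguard ⟨i', hi1, by dsimp only; rw [if_neg (by omega : ¬ i' = s)]; exact hi2⟩
      case pos =>
        by_cases hfree2 : ∀ j : Fin m, f.2 ≠ (e j).2
        · -- fresh path starting at f
          refine ⟨js, fun j => if j = js then h s else g j,
                 fun j => if j = js then f else e j, by simp [hieq], ?_, ?_, ?_, ?_, ?_, ?_, ?_, ?_⟩
          · intro j j' heq2
            dsimp only at heq2
            by_cases h1 : j = js <;> by_cases h2 : j' = js
            · rw [h1, h2]
            · rw [if_pos h1, if_neg h2] at heq2
              exact absurd heq2 (hdg s j' hs)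
            · rw [if_neg h1, if_pos h2] at heq2
              exact absurd heq2.symm (hdg s j hs)
            · rw [if_neg h1, if_neg h2] at heq2
              exact hg j j' heq2
          · intro j
            dsimp only
            by_cases h1 : j = js
            · rw [if_pos h1, if_pos h1]; exact hfM
            · rw [if_neg h1, if_neg h1]; exact he j
          · intro j
            dsimp only
            by_cases h1 : j = js
            · rw [if_pos h1, h1]; exact hjsf
            · rw [if_neg h1]
          · intro j j' heq2
            dsimp only at heq2
            by_cases h1 : j = js <;> by_cases h2 : j' = js
            · rw [h1, h2]
            · rw [if_pos h1, if_neg h2] at heq2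
              exact absurd heq2 (hfree2 j')
            · rw [if_neg h1, if_pos h2] at heq2
              exact absurd heq2.symm (hfree2 j)
            · rw [if_neg h1, if_neg h2] at heq2
              exact heB j j' heq2
          · intro j
            dsimp only
            by_cases h1 : j = js
            · rw [if_pos h1]; exact hfree2 js
            · rw [if_neg h1]
              intro heq2
              exact h1 (heB j js heq2)
          · intro j j' hguard heq2
            dsimp only at heq2
            by_cases h1 : j = js
            · rw [if_pos h1] at heq2
              exact absurd heq2 (hfree2 j')
            · rw [if_neg h1] at heq2
              exact heB j j' heq2
          · intro j hguard
            have hj : j ≠ js := by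
              intro hcon
              exact hguard ⟨s, by omega, by dsimp only; rw [if_pos rfl, hcon]⟩
            dsimp only
            rw [if_neg hj, if_neg hj]
            exact ⟨rfl, rfl⟩
          · intro j
            dsimp only
            by_cases h1 : j = js
            · rw [if_pos h1]
              exact Or.inr ⟨s, by omega, rfl⟩
            · rw [if_neg h1]
              exact Or.inl ⟨j, rfl⟩
        · -- attach f to a previously reached vertex
          push_neg at hfree2
          obtain ⟨j₀, hj₀⟩ := hfree2
          have hrch : ∃ i', i' < s ∧ w i' = (j₀ : ℕ) := by
            by_contra hcon
            exact hfP j₀ hcon hj₀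
          obtain ⟨i₀, hi₀s, hwi₀⟩ := hrch
          obtain ⟨jw, p, R, hjw, hpinj, hmem, hR1, hR2, hR4, hR5, hagree, hrange⟩ := hdata i₀ hi₀s
          have hjwj : jw = j₀ := Fin.ext (by rw [hjw, hwi₀])
          have hjwne : jw ≠ js := by
            intro hcon
            exact hfresh ⟨i₀, hi₀s, by rw [← hjw, hcon]⟩
          have hjsguard : ¬ ∃ i', i' ≤ i₀ ∧ w i' = (js : ℕ) := by
            rintro ⟨i', h1, h2⟩
            exact hfresh ⟨i', by omega, h2⟩
          refine ⟨js, fun j => if j = js then h s else p j,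
                 fun j => if j = js then f else R j, by simp [hieq], ?_, ?_, ?_, ?_, ?_, ?_, ?_, ?_⟩
          · intro j j' heq2
            dsimp only at heq2
            by_cases h1 : j = js <;> by_cases h2 : j' = js
            · rw [h1, h2]
            · rw [if_pos h1, if_neg h2] at heq2
              exfalso
              rcases hrange j' with ⟨j₁, hj₁⟩ | ⟨i', hi', hieq'⟩
              · rw [hj₁] at heq2
                exact hdg s j₁ hs heq2
              · rw [hieq'] at heq2
                have := hh s i' hs (by omega) heq2
                omega
            · rw [if_neg h1, if_pos h2] at heq2
              exfalso
              rcases hrange j with ⟨j₁, hj₁⟩ | ⟨i', hi', hieq'⟩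
              · rw [hj₁] at heq2
                exact hdg s j₁ hs heq2.symm
              · rw [hieq'] at heq2
                have := hh s i' hs (by omega) heq2.symm
                omega
            · rw [if_neg h1, if_neg h2] at heq2
              exact hpinj j j' heq2
          · intro j
            dsimp only
            by_cases h1 : j = js
            · rw [if_pos h1, if_pos h1]; exact hfM
            · rw [if_neg h1, if_neg h1]; exact hmem j
          · intro j
            dsimp only
            by_cases h1 : j = js
            · rw [if_pos h1, h1]; exact hjsf
            · rw [if_neg h1]; exact hR1 j
          · intro j j' heq2
            dsimp only at heq2
            by_cases h1 : j = js <;> by_cases h2 : j' = js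
            · rw [h1, h2]
            · rw [if_pos h1, if_neg h2] at heq2
              exfalso
              apply hR4 j'
              rw [← heq2, hj₀, hjwj]
            · rw [if_neg h1, if_pos h2] at heq2
              exfalso
              apply hR4 j
              rw [heq2, hj₀, hjwj]
            · rw [if_neg h1, if_neg h2] at heq2
              exact hR2 j j' heq2
          · intro j
            dsimp only
            by_cases h1 : j = js
            · rw [if_pos h1, hj₀]
              intro heq2
              exact hjwne (hjwj.trans (heB j₀ js heq2))
            · rw [if_neg h1]
              intro heq2
              exact h1 (hR5 j js hjsguard heq2)
          · intro j j' hguard heq2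
            dsimp only at heq2
            have hguard₀ : ¬ ∃ i', i' ≤ i₀ ∧ w i' = (j' : ℕ) := by
              rintro ⟨i', h1, h2⟩
              exact hguard ⟨i', by omega, by dsimp only; rw [if_neg (by omega : ¬ i' = s)]; exact h2⟩
            by_cases h1 : j = js
            · rw [if_pos h1] at heq2
              exfalso
              rw [hj₀] at heq2
              have hx : j₀ = j' := heB j₀ j' heq2
              exact hguard₀ ⟨i₀, le_rfl, by rw [hwi₀, hx]⟩
            · rw [if_neg h1] at heq2
              exact hR5 j j' hguard₀ heq2
          · intro j hguard
            have hj : j ≠ js := by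
              intro hcon
              exact hguard ⟨s, by omega, by dsimp only; rw [if_pos rfl, hcon]⟩
            have hguard₀ : ¬ ∃ i', i' ≤ i₀ ∧ w i' = (j : ℕ) := by
              rintro ⟨i', h1, h2⟩
              exact hguard ⟨i', by omega, by dsimp only; rw [if_neg (by omega : ¬ i' = s)]; exact h2⟩
            dsimp only
            rw [if_neg hj, if_neg hj]
            exact hagree j hguard₀
          · intro j
            dsimp only
            by_cases h1 : j = js
            · rw [if_pos h1]
              exact Or.inr ⟨s, by omega, rfl⟩
            · rw [if_neg h1]
              rcases hrange j with ⟨j₁, hj₁⟩ | ⟨i', hi', hieq'⟩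
              · exact Or.inl ⟨j₁, hj₁⟩
              · exact Or.inr ⟨i', by omega, hieq'⟩

lemma steplemma {m n : ℕ} (hmn : m < n) (M : ι → Finset (α × β))
    (hmatch : ∀ i, IsMatching (↑(M i) : Set (α × β)))
    (hcard : ∀ i, (M i).card = n)
    (g : Fin m → ι) (e : Fin m → α × β)
    (hg : ∀ j j' : Fin m, g j = g j' → j = j') (he : ∀ j, e j ∈ M (g j))
    (heA : ∀ j j' : Fin m, (e j).1 = (e j').1 → j = j')
    (heB : ∀ j j' : Fin m, (e j).2 = (e j').2 → j = j')
    (h : ℕ → ι)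
    (hh : ∀ i i', i ≤ m → i' ≤ m → h i = h i' → i = i')
    (hdg : ∀ i (j : Fin m), i ≤ m → h i ≠ g j) :
    RB (m+1) M := by
  classical
  rcases Nat.eq_zero_or_pos m with hm0 | hm
  · -- m = 0 : take any edge of M (h 0)
    subst hm0
    have hne : (M (h 0)).Nonempty := by
      rw [← Finset.card_pos, hcard]
      omega
    obtain ⟨f, hf⟩ := hne
    exact ⟨fun _ => h 0, fun _ => f,
      fun j j' _ => Fin.ext (by omega),
      fun _ => hf,
      fun j j' _ => Fin.ext (by omega),
      fun j j' _ => Fin.ext (by omega)⟩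
  · have all : ∀ s, s ≤ m + 1 → RB (m+1) M ∨ Inv M g e h s := by
      intro s
      induction s with
      | zero =>
        intro _
        exact Or.inr ⟨fun _ => 0, by omega, by omega, by omega⟩
      | succ t ih =>
        intro hts
        rcases ih (by omega) with rb | inv
        · exact Or.inl rb
        · exact key hm hmn M hmatch hcard g e hg he heA heB h hh hdg t (by omega) inv
    rcases all (m+1) le_rfl with rb | inv
    · exact rb
    · exfalso
      obtain ⟨w, hwlt, hwinj, -⟩ := inv
      have hinj : Function.Injective (fun i : Fin (m+1) => (⟨w i, hwlt i i.isLt⟩ : Fin m)) := by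
        intro a b hab
        exact Fin.ext (hwinj a b a.isLt b.isLt (congrArg Fin.val hab))
      have := Fintype.card_le_of_injective _ hinj
      simp only [Fintype.card_fin] at this
      omega

lemma grow {n : ℕ} (M : Fin (2 * n - 1) → Finset (α × β))
    (hmatch : ∀ i, IsMatching (↑(M i) : Set (α × β)))
    (hcard : ∀ i, (M i).card = n) :
    ∀ m, m ≤ n → RB m M := by
  intro m
  induction m with
  | zero =>
    intro _
    exact ⟨fun j => j.elim0, fun j => j.elim0, fun j => j.elim0, fun j => j.elim0,
      fun j => j.elim0, fun j => j.elim0⟩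
  | succ m ih =>
    intro hm1
    obtain ⟨g, e, hg, he, heA, heB⟩ := ih (by omega)
    classical
    set S : Finset (Fin (2 * n - 1)) := Finset.univ \ Finset.univ.image g with hSdef
    have hgcard : (Finset.univ.image g).card ≤ m := by
      calc (Finset.univ.image g).card ≤ (Finset.univ : Finset (Fin m)).card :=
            Finset.card_image_le
        _ = m := by simp
    have hScard : m + 1 ≤ S.card := by
      rw [hSdef, Finset.card_sdiff_of_subset (Finset.subset_univ _)]
      have : (Finset.univ : Finset (Fin (2 * n - 1))).card = 2 * n - 1 := by simp
      omega
    obtain ⟨T, hTS, hTcard⟩ := Finset.exists_subset_card_eq hScard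
    set F := T.orderIsoOfFin hTcard with hFdef
    set h : ℕ → Fin (2 * n - 1) := fun i =>
      if hi : i < m + 1 then (F ⟨i, hi⟩ : Fin (2 * n - 1)) else (F ⟨0, by omega⟩ : Fin (2 * n - 1))
      with hhdef
    have hmemT : ∀ i, i ≤ m → h i ∈ T := by
      intro i hi
      rw [hhdef]
      dsimp only
      rw [dif_pos (by omega : i < m + 1)]
      exact (F ⟨i, by omega⟩).2
    have hh : ∀ i i', i ≤ m → i' ≤ m → h i = h i' → i = i' := by
      intro i i' hi hi' heq
      rw [hhdef] at heq
      dsimp only at heq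
      rw [dif_pos (by omega : i < m + 1), dif_pos (by omega : i' < m + 1)] at heq
      have := F.injective (Subtype.coe_injective heq)
      exact Fin.mk.inj_iff.mp this
    have hdg : ∀ i (j : Fin m), i ≤ m → h i ≠ g j := by
      intro i j hi heq
      have hT := hTS (hmemT i hi)
      rw [hSdef, Finset.mem_sdiff] at hT
      exact hT.2 (heq ▸ Finset.mem_image_of_mem g (Finset.mem_univ j))
    exact steplemma (by omega) M hmatch hcard g e hg he heA heB h hh hdg

end DriskoAux

/-- Drisko's theorem (Aharoni–Berger form): `2n-1` matchings of size `n` in a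
bipartite graph have a rainbow matching of size `n`. -/
theorem stmt_1 {α β : Type*} (n : ℕ) (M : Fin (2 * n - 1) → Finset (α × β))
    (hmatch : ∀ i, IsMatching (↑(M i) : Set (α × β)))
    (hcard : ∀ i, (M i).card = n) :
    HasRainbowMatchingOfSize n (fun i => (↑(M i) : Set (α × β))) := by
  obtain ⟨g, e, hg, he, heA, heB⟩ := DriskoAux.grow M hmatch hcard n le_rfl
  refine ⟨⟨g, fun a b hab => hg a b hab⟩, e, ?_, ?_, ?_⟩
  · intro a b hab
    exact heA a b (by rw [hab])
  · intro j
    exact he j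
  · intro x hx y hy hne
    obtain ⟨a, rfl⟩ := hx
    obtain ⟨b, rfl⟩ := hy
    constructor
    · intro h1
      exact hne (by rw [heA a b h1])
    · intro h2
      exact hne (by rw [heB a b h2])
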